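/- Let n ≥ 2. An element g ∈ GL(n,ℝ) satisfies p ∘ g = p for every SO(n)-invariant polynomial function p on ℝⁿ if and only if g belongs to the orthogonal group O(n). (That is, SO(n)′ = O(n).) -/

import Mathlib

open Matrix

/-- A Householder reflection orthogonal to `v`: orthogonal, determinant `-1`, fixes
vectors orthogonal to `v`. -/
lemma exists_reflection {n : ℕ} (v : Fin n → ℝ) (hv : v ≠ 0) :
    ∃ r : Matrix (Fin n) (Fin n) ℝ, r * rᵀ = 1 ∧ r.det = -1 ∧
      ∀ x : Fin n → ℝ, v ⬝ᵥ x = 0 → r.mulVec x = x := by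
  have hd : v ⬝ᵥ v ≠ 0 := fun h => hv (dotProduct_self_eq_zero.mp h)
  set c : ℝ := 2 / (v ⬝ᵥ v) with hc
  refine ⟨1 - c • vecMulVec v v, ?_, ?_, ?_⟩
  · have hsymm : (1 - c • vecMulVec v v)ᵀ = 1 - c • vecMulVec v v := by
      rw [transpose_sub, transpose_smul, transpose_one]
      congr 1
      congr 1
      ext i j
      simp [vecMulVec_apply, mul_comm]
    rw [hsymm]
    have hMM : vecMulVec v v * vecMulVec v v = (v ⬝ᵥ v) • vecMulVec v v := by
      ext i j
      simp only [mul_apply, vecMulVec_apply, Matrix.smul_apply, smul_eq_mul, dotProduct,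
        Finset.sum_mul]
      apply Finset.sum_congr rfl
      intro k _
      ring
    have hcc : c * c * (v ⬝ᵥ v) = c + c := by
      rw [hc]; field_simp; ring
    have hAA : (c • vecMulVec v v) * (c • vecMulVec v v)
        = c • vecMulVec v v + c • vecMulVec v v := by
      rw [smul_mul_smul_comm, hMM, smul_smul, hcc, add_smul]
    rw [mul_sub, mul_one, sub_mul, one_mul, hAA]
    abel
  · have heq : 1 - c • vecMulVec v v = 1 + replicateCol Unit (-(c • v)) * replicateRow Unit v := by
      rw [← vecMulVec_eq]
      ext i j
      simp [vecMulVec_apply]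
      ring
    rw [heq, det_one_add_replicateCol_mul_replicateRow]
    have : v ⬝ᵥ -(c • v) = -(c * (v ⬝ᵥ v)) := by
      rw [dotProduct_neg, dotProduct_smul]
      simp [smul_eq_mul]
    rw [this]
    have : c * (v ⬝ᵥ v) = 2 := by rw [hc]; field_simp
    rw [this]; norm_num
  · intro x hx
    have hmv : (vecMulVec v v).mulVec x = 0 := by
      ext i
      simp only [mulVec, vecMulVec_apply, dotProduct, Pi.zero_apply]
      have : ∑ j, v i * v j * x j = v i * (v ⬝ᵥ x) := by
        rw [dotProduct, Finset.mul_sum]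
        apply Finset.sum_congr rfl
        intro k _
        ring
      rw [this, hx, mul_zero]
    rw [sub_mulVec, one_mulVec, smul_mulVec, hmv, smul_zero, sub_zero]

/-- Orthogonal matrices preserve the dot product. -/
lemma mulVec_dot_self {n : ℕ} (M : Matrix (Fin n) (Fin n) ℝ) (hM : Mᵀ * M = 1)
    (x : Fin n → ℝ) : M.mulVec x ⬝ᵥ M.mulVec x = x ⬝ᵥ x := by
  have h1 : M.mulVec x = x ᵥ* Mᵀ := by
    rw [← mulVec_transpose, transpose_transpose]
  rw [dotProduct_mulVec, h1, vecMul_vecMul, hM, vecMul_one]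

/-- For `n ≥ 2`, an element `g ∈ GL(n, ℝ)` fixes every `SO(n)`-invariant
polynomial function on `ℝⁿ` if and only if `g` is an orthogonal matrix: `SO(n)′ = O(n)`. -/
theorem SO_prime_eq_O
    (n : ℕ) (hn : 2 ≤ n) (g : GL (Fin n) ℝ) :
    (∀ q : MvPolynomial (Fin n) ℝ,
      (∀ h : Matrix (Fin n) (Fin n) ℝ, h * hᵀ = 1 → h.det = 1 →
        ∀ x : Fin n → ℝ, MvPolynomial.eval (h.mulVec x) q = MvPolynomial.eval x q) →
      ∀ x : Fin n → ℝ,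
        MvPolynomial.eval ((g : Matrix (Fin n) (Fin n) ℝ).mulVec x) q = MvPolynomial.eval x q)
    ↔ (g : Matrix (Fin n) (Fin n) ℝ) * (g : Matrix (Fin n) (Fin n) ℝ)ᵀ = 1 := by
  set G : Matrix (Fin n) (Fin n) ℝ := (g : Matrix (Fin n) (Fin n) ℝ) with hG
  constructor
  · intro H
    -- use the invariant polynomial ∑ Xᵢ²
    set q : MvPolynomial (Fin n) ℝ :=
      ∑ i : Fin n, MvPolynomial.X i * MvPolynomial.X i with hq
    have heval : ∀ y : Fin n → ℝ, MvPolynomial.eval y q = y ⬝ᵥ y := by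
      intro y
      simp [hq, dotProduct]
    have hinv : ∀ h : Matrix (Fin n) (Fin n) ℝ, h * hᵀ = 1 → h.det = 1 →
        ∀ x : Fin n → ℝ, MvPolynomial.eval (h.mulVec x) q = MvPolynomial.eval x q := by
      intro h hh _ x
      rw [heval, heval, mulVec_dot_self h (mul_eq_one_comm.mp hh) x]
    have K : ∀ x : Fin n → ℝ, G.mulVec x ⬝ᵥ G.mulVec x = x ⬝ᵥ x := by
      intro x
      have := H q hinv x
      rwa [heval, heval] at this
    -- polarization
    have K2 : ∀ x y : Fin n → ℝ, G.mulVec x ⬝ᵥ G.mulVec y = x ⬝ᵥ y := by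
      intro x y
      have h1 := K (x + y)
      rw [mulVec_add, add_dotProduct, dotProduct_add, dotProduct_add,
        add_dotProduct, dotProduct_add, dotProduct_add, K x, K y] at h1
      have h2 : G.mulVec y ⬝ᵥ G.mulVec x = G.mulVec x ⬝ᵥ G.mulVec y := dotProduct_comm _ _
      have h3 : (y : Fin n → ℝ) ⬝ᵥ x = x ⬝ᵥ y := dotProduct_comm _ _
      rw [h2, h3] at h1
      linarith
    have hGt : Gᵀ * G = 1 := by
      ext i j
      have := K2 (Pi.single i 1) (Pi.single j 1)
      rw [mulVec_single, mulVec_single, single_dotProduct, Pi.single_apply] at this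
      have h2 : ∑ k, G k i * G k j = if i = j then 1 else 0 := by
        simpa [dotProduct] using this
      rw [mul_apply, one_apply]
      simp only [transpose_apply]
      exact h2
    exact mul_eq_one_comm.mp hGt
  · intro hg q hq x
    have hdet2 : G.det * G.det = 1 := by
      have := congrArg Matrix.det hg
      rwa [det_mul, det_transpose, det_one] at this
    rcases mul_self_eq_one_iff.mp hdet2 with hdet | hdet
    · exact hq G hg hdet x
    · -- det G = -1 : compose with a reflection fixing x
      have h01 : (⟨0, by omega⟩ : Fin n) ≠ ⟨1, by omega⟩ := by
        simp [Fin.ext_iff]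
      set i0 : Fin n := ⟨0, by omega⟩
      set i1 : Fin n := ⟨1, by omega⟩
      obtain ⟨v, hv0, hvx⟩ : ∃ v : Fin n → ℝ, v ≠ 0 ∧ v ⬝ᵥ x = 0 := by
        by_cases h0 : x i0 = 0
        · refine ⟨Pi.single i0 1, ?_, ?_⟩
          · intro h
            have := congrFun h i0
            simp at this
          · rw [single_dotProduct, h0, mul_zero]
        · refine ⟨Pi.single i0 (x i1) - Pi.single i1 (x i0), ?_, ?_⟩
          · intro h
            have h2 := congrFun h i1
            simp only [Pi.sub_apply, Pi.zero_apply] at h2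
            rw [Pi.single_eq_of_ne (Ne.symm h01), Pi.single_eq_same] at h2
            exact h0 (by linarith)
          · rw [sub_dotProduct, single_dotProduct, single_dotProduct]
            ring
      obtain ⟨r, hr1, hrdet, hrfix⟩ := exists_reflection v hv0
      have hGr : (G * r) * (G * r)ᵀ = 1 := by
        rw [transpose_mul]
        calc G * r * (rᵀ * Gᵀ) = G * (r * rᵀ) * Gᵀ := by
              rw [Matrix.mul_assoc, Matrix.mul_assoc, Matrix.mul_assoc]
          _ = 1 := by rw [hr1, Matrix.mul_one, hg]
      have hGrdet : (G * r).det = 1 := by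
        rw [det_mul, hdet, hrdet]; norm_num
      have := hq (G * r) hGr hGrdet x
      rwa [← mulVec_mulVec, hrfix x hvx] at this
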